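/- arXiv:1307.7309 — 2 statements merged into one kernel-verified Lean document; each statement's English description precedes it below -/
import Mathlib

section
/- Under the assumptions of the sliding-window deviation lemma (decisions with rewards r_k·X_k, a random set Λ ⊆ ∪_{s≥1} Λ(s) with |Λ(s)| ≤ 1, t_k(n) ≥ ε·s for n ∈ Λ(s), and the event {n ∈ Λ(s)} being F_n-measurable), the expected number of instants n ∈ Λ at which |μ̂_k(n) − E[μ̂_k(n)]| > δ is at most r_k²/(ε·δ²). -/
open MeasureTheory ProbabilityTheory
open scoped ENNReal

set_option maxHeartbeats 1000000

section SlidingAux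

lemma logistic_bound {p : ℝ} (hp0 : 0 ≤ p) (hp1 : p ≤ 1) (h : ℝ) :
    -h * p + Real.log (1 - p + p * Real.exp h) ≤ h ^ 2 / 8 := by
  have hD : ∀ x : ℝ, 0 < 1 - p + p * Real.exp x := by
    intro x
    rcases hp0.lt_or_eq with hp | hp
    · have := mul_pos hp (Real.exp_pos x); linarith
    · rw [← hp]; norm_num
  set g : ℝ → ℝ := fun x => x ^ 2 / 8 + x * p - Real.log (1 - p + p * Real.exp x) with hgdef
  set g' : ℝ → ℝ := fun x => x / 4 + p - p * Real.exp x / (1 - p + p * Real.exp x) with hg'def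
  have hDd : ∀ x : ℝ, HasDerivAt (fun x => 1 - p + p * Real.exp x) (p * Real.exp x) x := by
    intro x
    exact ((Real.hasDerivAt_exp x).const_mul p).const_add (1 - p)
  have hg : ∀ x, HasDerivAt g (g' x) x := by
    intro x
    have h1 : HasDerivAt (fun x : ℝ => x ^ 2 / 8) (x / 4) x := by
      have := (hasDerivAt_pow 2 x).div_const 8
      refine this.congr_deriv ?_; rw [show (2:ℕ) - 1 = 1 from rfl]; push_cast; ring
    have h2 : HasDerivAt (fun x : ℝ => x * p) p x := by
      simpa using (hasDerivAt_id x).mul_const p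
    have h3 : HasDerivAt (fun x => Real.log (1 - p + p * Real.exp x))
        (p * Real.exp x / (1 - p + p * Real.exp x)) x := (hDd x).log (hD x).ne'
    exact (h1.add h2).sub h3
  have hg' : ∀ x, HasDerivAt g' (1 / 4 - p * Real.exp x * (1 - p) / (1 - p + p * Real.exp x) ^ 2) x := by
    intro x
    have h1 : HasDerivAt (fun x : ℝ => x / 4 + p) (1 / 4) x := by
      simpa using ((hasDerivAt_id x).div_const 4).add_const p
    have h2 : HasDerivAt (fun x => p * Real.exp x / (1 - p + p * Real.exp x))
        ((p * Real.exp x * (1 - p + p * Real.exp x) - p * Real.exp x * (p * Real.exp x)) /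
          (1 - p + p * Real.exp x) ^ 2) x :=
      ((Real.hasDerivAt_exp x).const_mul p).div (hDd x) (hD x).ne'
    have := h1.sub h2
    refine this.congr_deriv ?_
    have hx := (hD x).ne'
    congr 2
    ring
  have hg'' : ∀ x, 0 ≤ 1 / 4 - p * Real.exp x * (1 - p) / (1 - p + p * Real.exp x) ^ 2 := by
    intro x
    have hu : 0 ≤ p * Real.exp x := mul_nonneg hp0 (Real.exp_pos x).le
    have hv : 0 ≤ 1 - p := by linarith
    have hDx := hD x
    rw [sub_nonneg, div_le_iff₀ (by positivity)]
    nlinarith [sq_nonneg (1 - p - p * Real.exp x)]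
  have hmono : Monotone g' := by
    apply monotone_of_deriv_nonneg
    · exact fun x => (hg' x).differentiableAt
    · intro x; rw [(hg' x).deriv]; exact hg'' x
  have hg'0 : g' 0 = 0 := by
    simp [hg'def, Real.exp_zero]
  have hgc : Continuous g := by
    have : Differentiable ℝ g := fun x => (hg x).differentiableAt
    exact this.continuous
  have hg0 : g 0 = 0 := by
    simp [hgdef]
  have key : 0 ≤ g h := by
    rcases le_total 0 h with hh | hh
    · have hm : MonotoneOn g (Set.Ici 0) := by
        apply monotoneOn_of_deriv_nonneg (convex_Ici 0) (hgc.continuousOn)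
        · intro x _; exact (hg x).differentiableAt.differentiableWithinAt
        · intro x hx
          rw [interior_Ici] at hx
          rw [(hg x).deriv]
          have := hmono (le_of_lt hx)
          rw [hg'0] at this; exact this
      have := hm (Set.mem_Ici.2 le_rfl) (Set.mem_Ici.2 hh) hh
      linarith [hg0 ▸ this]
    · have hm : AntitoneOn g (Set.Iic 0) := by
        apply antitoneOn_of_deriv_nonpos (convex_Iic 0) (hgc.continuousOn)
        · intro x _; exact (hg x).differentiableAt.differentiableWithinAt
        · intro x hx
          rw [interior_Iic] at hx
          rw [(hg x).deriv]
          have := hmono (le_of_lt hx)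
          rw [hg'0] at this; exact this
      have := hm (Set.mem_Iic.2 hh) (Set.mem_Iic.2 le_rfl) hh
      linarith [hg0 ▸ this]
  have : g h = h ^ 2 / 8 + h * p - Real.log (1 - p + p * Real.exp h) := rfl
  linarith [key, this ▸ key]

lemma hoeffding_mgf {Ω : Type*} {mΩ : MeasurableSpace Ω} (μ : Measure Ω)
    [IsProbabilityMeasure μ] {r c l : ℝ} (hr : 0 < r) {Y : Ω → ℝ}
    (hY : Measurable Y) (hbd : ∀ᵐ ω ∂μ, Y ω ∈ Set.Icc 0 r)
    (hmean : ∫ ω, Y ω ∂μ = c) :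
    ∫ ω, Real.exp (l * (Y ω - c)) ∂μ ≤ Real.exp (l ^ 2 * r ^ 2 / 8) := by
  have hYint : Integrable Y μ := by
    refine (integrable_const r).mono' hY.aestronglyMeasurable ?_
    filter_upwards [hbd] with ω h
    rw [Real.norm_eq_abs, abs_le]
    constructor <;> [linarith [h.1, hr]; exact h.2]
  have hc0 : 0 ≤ c := by
    rw [← hmean]; exact integral_nonneg_of_ae (by filter_upwards [hbd] with ω h using h.1)
  have hcr : c ≤ r := by
    rw [← hmean]
    calc ∫ ω, Y ω ∂μ ≤ ∫ _, r ∂μ :=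
          integral_mono_ae hYint (integrable_const r) (by filter_upwards [hbd] with ω h using h.2)
      _ = r := by simp
  set A : ℝ := Real.exp (-l * c) with hA
  set B : ℝ := A * (Real.exp (l * r) - 1) / r with hB
  have hpt : ∀ᵐ ω ∂μ, Real.exp (l * (Y ω - c)) ≤ A + B * Y ω := by
    filter_upwards [hbd] with ω h
    obtain ⟨h0, h1⟩ := h
    set y := Y ω
    have ha : (0:ℝ) ≤ 1 - y / r := by
      rw [sub_nonneg]; exact div_le_one_of_le₀ h1 hr.le
    have hb : (0:ℝ) ≤ y / r := by positivity
    have hconv := (convexOn_exp).2 (Set.mem_univ (0:ℝ)) (Set.mem_univ (l * r))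
      ha hb (by ring)
    simp only [smul_eq_mul, mul_zero, zero_add, Real.exp_zero, mul_one] at hconv
    have hyx : y / r * (l * r) = l * y := by field_simp
    rw [hyx] at hconv
    have : Real.exp (l * (y - c)) = Real.exp (-l * c) * Real.exp (l * y) := by
      rw [← Real.exp_add]; ring_nf
    rw [this]
    have h2 : Real.exp (-l * c) * Real.exp (l * y) ≤
        Real.exp (-l * c) * ((1 - y / r) + y / r * Real.exp (l * r)) :=
      mul_le_mul_of_nonneg_left hconv (Real.exp_pos _).le
    refine h2.trans_eq ?_
    simp only [hB, hA, neg_mul]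
    field_simp
    ring
  have hLint : Integrable (fun ω => Real.exp (l * (Y ω - c))) μ := by
    refine (integrable_const (Real.exp (|l| * (r + |c|)))).mono'
      ((Real.measurable_exp.comp ((hY.sub measurable_const).const_mul l)).aestronglyMeasurable) ?_
    filter_upwards [hbd] with ω h
    rw [Real.norm_eq_abs, abs_of_pos (Real.exp_pos _)]
    apply Real.exp_le_exp.2
    have : |Y ω - c| ≤ r + |c| := by
      rw [abs_le]; constructor
      · have := abs_nonneg c; cases abs_cases c <;> nlinarith [h.1, h.2]
      · cases abs_cases c <;> nlinarith [h.1, h.2]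
    calc l * (Y ω - c) ≤ |l * (Y ω - c)| := le_abs_self _
      _ = |l| * |Y ω - c| := abs_mul _ _
      _ ≤ |l| * (r + |c|) := mul_le_mul_of_nonneg_left this (abs_nonneg l)
  have hRint : Integrable (fun ω => A + B * Y ω) μ :=
    (integrable_const A).add (hYint.const_mul B)
  have hint : ∫ ω, Real.exp (l * (Y ω - c)) ∂μ ≤ A + B * c := by
    calc ∫ ω, Real.exp (l * (Y ω - c)) ∂μ ≤ ∫ ω, A + B * Y ω ∂μ :=
          integral_mono_ae hLint hRint hpt
      _ = A + B * c := by
          rw [integral_add (integrable_const A) (hYint.const_mul B),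
            integral_const_mul, hmean]
          simp
  refine hint.trans ?_
  set p : ℝ := c / r with hp
  have hp0 : 0 ≤ p := by positivity
  have hp1 : p ≤ 1 := div_le_one_of_le₀ hcr hr.le
  have hDpos : 0 < 1 - p + p * Real.exp (l * r) := by
    rcases hp0.lt_or_eq with h' | h'
    · have := mul_pos h' (Real.exp_pos (l * r)); linarith
    · rw [← h']; norm_num
  have hAB : A + B * c = Real.exp (-(l * r) * p + Real.log (1 - p + p * Real.exp (l * r))) := by
    rw [Real.exp_add, Real.exp_log hDpos, hA, hB, hp]
    have : -(l * r) * (c / r) = -l * c := by field_simp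
    rw [this]
    simp only [hB, hA, neg_mul]
    field_simp
    ring
  rw [hAB]
  apply Real.exp_le_exp.2
  have := logistic_bound hp0 hp1 (l * r)
  calc -(l * r) * p + Real.log (1 - p + p * Real.exp (l * r)) ≤ (l * r) ^ 2 / 8 := this
    _ = l ^ 2 * r ^ 2 / 8 := by ring

section Aux

variable {Ω : Type*} {mΩ : MeasurableSpace Ω}

/-- Partial sums of the rewards. -/
def Ssum (X : ℕ → Ω → ℝ) (t : ℕ) (ω : Ω) : ℝ := ∑ i ∈ Finset.range t, X i ω

/-- Deviation event at time `t`. -/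
def Aset (X : ℕ → Ω → ℝ) (m : ℕ) (δ c : ℝ) (t : ℕ) : Set Ω :=
  {ω | m ≤ t ∧ (t : ℝ) * δ < Ssum X t ω - t * c}

/-- No deviation strictly before time `n`. -/
def Gset (X : ℕ → Ω → ℝ) (m : ℕ) (δ c : ℝ) (n : ℕ) : Set Ω :=
  {ω | ∀ u, u < n → ω ∉ Aset X m δ c u}

/-- First deviation at time `t`. -/
def Eset (X : ℕ → Ω → ℝ) (m : ℕ) (δ c : ℝ) (t : ℕ) : Set Ω :=
  Gset X m δ c t ∩ Aset X m δ c t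

/-- Exponential supermartingale. -/
noncomputable def Mfun (X : ℕ → Ω → ℝ) (c l K : ℝ) (t : ℕ) (ω : Ω) : ℝ≥0∞ :=
  ENNReal.ofReal (Real.exp (l * (Ssum X t ω - t * c) - t * K))

/-- Partial-sum functional on coordinates indexed by `Finset.range n`. -/
def SvAux (n : ℕ) (v : ↥(Finset.range n) → ℝ) (u : ℕ) : ℝ :=
  ∑ i ∈ Finset.range u, if h : i ∈ Finset.range n then v ⟨i, h⟩ else 0

/-- Functional representation of `(Gset (n+1)).indicator (Mfun n)`. -/
noncomputable def PhiAux (n m : ℕ) (δ c l K : ℝ) (v : ↥(Finset.range n) → ℝ) : ℝ≥0∞ :=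
  Set.indicator {v | ∀ u, u < n + 1 → ¬(m ≤ u ∧ (u : ℝ) * δ < SvAux n v u - u * c)}
    (fun v => ENNReal.ofReal (Real.exp (l * (SvAux n v n - n * c) - n * K))) v

/-- Functional representation of the step factor. -/
noncomputable def PsiAux (n : ℕ) (c l K : ℝ) (v : ↥({n} : Finset ℕ) → ℝ) : ℝ≥0∞ :=
  ENNReal.ofReal (Real.exp (l * (v ⟨n, Finset.mem_singleton_self n⟩ - c) - K))

lemma Ssum_measurable {X : ℕ → Ω → ℝ} (hX : ∀ i, Measurable (X i)) (t : ℕ) :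
    Measurable (Ssum X t) :=
  Finset.measurable_sum _ (fun i _ => hX i)

lemma Aset_measurable {X : ℕ → Ω → ℝ} (hX : ∀ i, Measurable (X i)) (m : ℕ) (δ c : ℝ) (t : ℕ) :
    MeasurableSet (Aset X m δ c t) := by
  have : Aset X m δ c t = {ω | m ≤ t} ∩ {ω | (t : ℝ) * δ < Ssum X t ω - t * c} := by
    ext ω; simp [Aset, Set.mem_setOf_eq, Set.mem_inter_iff]
  rw [this]
  exact (MeasurableSet.const _).inter
    (measurableSet_lt measurable_const ((Ssum_measurable hX t).sub measurable_const))

lemma Gset_measurable {X : ℕ → Ω → ℝ} (hX : ∀ i, Measurable (X i)) (m : ℕ) (δ c : ℝ) (n : ℕ) :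
    MeasurableSet (Gset X m δ c n) := by
  have : Gset X m δ c n = ⋂ (u : ℕ), ⋂ (_ : u < n), (Aset X m δ c u)ᶜ := by
    ext ω; simp [Gset, Set.mem_iInter]
  rw [this]
  exact MeasurableSet.iInter fun u => MeasurableSet.iInter fun _ =>
    (Aset_measurable hX m δ c u).compl

lemma Eset_measurable {X : ℕ → Ω → ℝ} (hX : ∀ i, Measurable (X i)) (m : ℕ) (δ c : ℝ) (t : ℕ) :
    MeasurableSet (Eset X m δ c t) :=
  (Gset_measurable hX m δ c t).inter (Aset_measurable hX m δ c t)

lemma Mfun_measurable {X : ℕ → Ω → ℝ} (hX : ∀ i, Measurable (X i)) (c l K : ℝ) (t : ℕ) :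
    Measurable (Mfun X c l K t) :=
  ENNReal.measurable_ofReal.comp (Real.measurable_exp.comp
    ((((Ssum_measurable hX t).sub measurable_const).const_mul l).sub measurable_const))

lemma SvAux_measurable (n u : ℕ) : Measurable fun v => SvAux n v u := by
  apply Finset.measurable_sum
  intro i _
  by_cases h : i ∈ Finset.range n
  · simpa [h] using measurable_pi_apply (⟨i, h⟩ : ↥(Finset.range n))
  · simpa [h] using @measurable_const ℝ _ _ _ 0

lemma PhiAux_measurable (n m : ℕ) (δ c l K : ℝ) : Measurable (PhiAux n m δ c l K) := by
  apply Measurable.indicator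
  · exact ENNReal.measurable_ofReal.comp (Real.measurable_exp.comp
      ((((SvAux_measurable n n).sub measurable_const).const_mul l).sub measurable_const))
  · have : {v : ↥(Finset.range n) → ℝ | ∀ u, u < n + 1 → ¬(m ≤ u ∧ (u : ℝ) * δ < SvAux n v u - u * c)}
        = ⋂ (u : ℕ), ⋂ (_ : u < n + 1), ({v | m ≤ u} ∩ {v | (u : ℝ) * δ < SvAux n v u - u * c})ᶜ := by
      ext v; simp [Set.mem_iInter, not_and]
    rw [this]
    exact MeasurableSet.iInter fun u => MeasurableSet.iInter fun _ =>
      ((MeasurableSet.const _).inter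
        (measurableSet_lt measurable_const ((SvAux_measurable n u).sub measurable_const))).compl

lemma PsiAux_measurable (n : ℕ) (c l K : ℝ) : Measurable (PsiAux n c l K) :=
  ENNReal.measurable_ofReal.comp (Real.measurable_exp.comp
    (by fun_prop))

lemma SvAux_eq (X : ℕ → Ω → ℝ) (n : ℕ) (ω : Ω) {u : ℕ} (hu : u ≤ n) :
    SvAux n (fun i => X i.1 ω) u = Ssum X u ω := by
  apply Finset.sum_congr rfl
  intro i hi
  have hin : i ∈ Finset.range n :=
    Finset.mem_range.2 (lt_of_lt_of_le (Finset.mem_range.1 hi) hu)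
  simp [hin]

lemma PhiAux_eq (X : ℕ → Ω → ℝ) (n m : ℕ) (δ c l K : ℝ) (ω : Ω) :
    PhiAux n m δ c l K (fun i => X i.1 ω)
      = (Gset X m δ c (n + 1)).indicator (Mfun X c l K n) ω := by
  have hset : ((fun i : ↥(Finset.range n) => X i.1 ω) ∈
      {v | ∀ u, u < n + 1 → ¬(m ≤ u ∧ (u : ℝ) * δ < SvAux n v u - u * c)})
      ↔ ω ∈ Gset X m δ c (n + 1) := by
    constructor
    · intro hv u hu
      have h1 := hv u hu
      rw [SvAux_eq X n ω (Nat.lt_succ_iff.1 hu)] at h1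
      exact h1
    · intro hω u hu
      have h1 := hω u hu
      rw [SvAux_eq X n ω (Nat.lt_succ_iff.1 hu)]
      exact h1
  by_cases hω : ω ∈ Gset X m δ c (n + 1)
  · rw [PhiAux, Set.indicator_of_mem (hset.2 hω), Set.indicator_of_mem hω,
      SvAux_eq X n ω le_rfl]
    rfl
  · rw [PhiAux, Set.indicator_of_notMem (fun hc => hω (hset.1 hc)),
      Set.indicator_of_notMem hω]

lemma Mfun_succ (X : ℕ → Ω → ℝ) (c l K : ℝ) (n : ℕ) (ω : Ω) :
    Mfun X c l K (n + 1) ω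
      = Mfun X c l K n ω * ENNReal.ofReal (Real.exp (l * (X n ω - c) - K)) := by
  rw [Mfun, Mfun, ← ENNReal.ofReal_mul (Real.exp_nonneg _), ← Real.exp_add]
  congr 2
  have hS : Ssum X (n + 1) ω = Ssum X n ω + X n ω := Finset.sum_range_succ _ n
  rw [hS]; push_cast; ring

end Aux

section Max

variable {Ω : Type*} {mΩ : MeasurableSpace Ω} {μ : Measure Ω}

lemma factor_lemma {X : ℕ → Ω → ℝ} (hXmeas : ∀ i, Measurable (X i))
    (hXindep : iIndepFun X μ) (n : ℕ)
    {Φ : (↥(Finset.range n) → ℝ) → ℝ≥0∞} (hΦ : Measurable Φ)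
    {ψ : (↥({n} : Finset ℕ) → ℝ) → ℝ≥0∞} (hψ : Measurable ψ) :
    ∫⁻ ω, Φ (fun i => X i.1 ω) * ψ (fun i => X i.1 ω) ∂μ
      = (∫⁻ ω, Φ (fun i => X i.1 ω) ∂μ) * ∫⁻ ω, ψ (fun i => X i.1 ω) ∂μ := by
  have hbase : IndepFun (fun ω (i : ↥(Finset.range n)) => X i.1 ω)
      (fun ω (i : ↥({n} : Finset ℕ)) => X i.1 ω) μ :=
    hXindep.indepFun_finset (Finset.range n) {n}
      (by simp [Finset.disjoint_singleton_right]) hXmeas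
  exact lintegral_mul_eq_lintegral_mul_lintegral_of_indepFun
    (hΦ.comp (measurable_pi_lambda _ fun i => hXmeas i.1))
    (hψ.comp (measurable_pi_lambda _ fun i => hXmeas i.1))
    (hbase.comp hΦ hψ)

lemma hfactor [IsProbabilityMeasure μ] {r δ c : ℝ} (hr : 0 < r) (hδ : 0 < δ)
    {X : ℕ → Ω → ℝ} (hXmeas : ∀ i, Measurable (X i))
    (hXbound : ∀ i, ∀ᵐ ω ∂μ, X i ω ∈ Set.Icc 0 r)
    (hXmean : ∀ i, ∫ ω, X i ω ∂μ = c) (n : ℕ) :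
    ∫⁻ ω, ENNReal.ofReal (Real.exp ((4 * δ / r ^ 2) * (X n ω - c) - 2 * δ ^ 2 / r ^ 2)) ∂μ
      ≤ 1 := by
  set l : ℝ := 4 * δ / r ^ 2 with hldef
  set K : ℝ := 2 * δ ^ 2 / r ^ 2 with hKdef
  have hmeas : Measurable fun ω => Real.exp (l * (X n ω - c) - K) :=
    Real.measurable_exp.comp ((((hXmeas n).sub measurable_const).const_mul l).sub
      measurable_const)
  have hint : Integrable (fun ω => Real.exp (l * (X n ω - c) - K)) μ := by
    refine (integrable_const (Real.exp (|l| * (r + |c|)))).mono'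
      hmeas.aestronglyMeasurable ?_
    filter_upwards [hXbound n] with ω h
    rw [Real.norm_eq_abs, abs_of_pos (Real.exp_pos _)]
    apply Real.exp_le_exp.2
    have h1 : |X n ω - c| ≤ r + |c| := by
      rw [abs_le]; constructor
      · cases abs_cases c <;> nlinarith [h.1, h.2, hr]
      · cases abs_cases c <;> nlinarith [h.1, h.2]
    have hK0 : (0:ℝ) ≤ K := by positivity
    have h2 : l * (X n ω - c) ≤ |l| * (r + |c|) := by
      calc l * (X n ω - c) ≤ |l * (X n ω - c)| := le_abs_self _
        _ = |l| * |X n ω - c| := abs_mul _ _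
        _ ≤ |l| * (r + |c|) := mul_le_mul_of_nonneg_left h1 (abs_nonneg l)
    linarith
  rw [← ofReal_integral_eq_lintegral_ofReal hint
    (Filter.Eventually.of_forall fun ω => (Real.exp_pos _).le)]
  rw [ENNReal.ofReal_le_one]
  have heq : (fun ω => Real.exp (l * (X n ω - c) - K))
      = fun ω => Real.exp (l * (X n ω - c)) * Real.exp (-K) := by
    funext ω; rw [← Real.exp_add]; ring_nf
  rw [heq, integral_mul_const]
  have hh := hoeffding_mgf μ hr (hXmeas n) (hXbound n) (hXmean n) (l := l)
  have hKeq : l ^ 2 * r ^ 2 / 8 = K := by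
    rw [hldef, hKdef]; field_simp; ring
  calc (∫ ω, Real.exp (l * (X n ω - c)) ∂μ) * Real.exp (-K)
      ≤ Real.exp (l ^ 2 * r ^ 2 / 8) * Real.exp (-K) :=
        mul_le_mul_of_nonneg_right hh (Real.exp_pos _).le
    _ = 1 := by rw [hKeq, ← Real.exp_add]; simp

lemma hstep [IsProbabilityMeasure μ] {r δ c : ℝ} (hr : 0 < r) (hδ : 0 < δ)
    {X : ℕ → Ω → ℝ} (hXmeas : ∀ i, Measurable (X i))
    (hXindep : iIndepFun X μ)
    (hXbound : ∀ i, ∀ᵐ ω ∂μ, X i ω ∈ Set.Icc 0 r)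
    (hXmean : ∀ i, ∫ ω, X i ω ∂μ = c) (m n : ℕ) :
    ∫⁻ ω, (Gset X m δ c (n + 1)).indicator
        (Mfun X c (4 * δ / r ^ 2) (2 * δ ^ 2 / r ^ 2) (n + 1)) ω ∂μ
      ≤ ∫⁻ ω, (Gset X m δ c (n + 1)).indicator
        (Mfun X c (4 * δ / r ^ 2) (2 * δ ^ 2 / r ^ 2) n) ω ∂μ := by
  set l : ℝ := 4 * δ / r ^ 2 with hldef
  set K : ℝ := 2 * δ ^ 2 / r ^ 2 with hKdef
  have hsplit : ∀ ω, (Gset X m δ c (n + 1)).indicator (Mfun X c l K (n + 1)) ω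
      = PhiAux n m δ c l K (fun i => X i.1 ω) * PsiAux n c l K (fun i => X i.1 ω) := by
    intro ω
    rw [PhiAux_eq]
    have hψ : PsiAux n c l K (fun i : ↥({n} : Finset ℕ) => X i.1 ω)
        = ENNReal.ofReal (Real.exp (l * (X n ω - c) - K)) := rfl
    rw [hψ]
    by_cases hω : ω ∈ Gset X m δ c (n + 1)
    · rw [Set.indicator_of_mem hω, Set.indicator_of_mem hω, Mfun_succ]
    · rw [Set.indicator_of_notMem hω, Set.indicator_of_notMem hω, zero_mul]
  calc ∫⁻ ω, (Gset X m δ c (n + 1)).indicator (Mfun X c l K (n + 1)) ω ∂μ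
      = ∫⁻ ω, PhiAux n m δ c l K (fun i => X i.1 ω)
          * PsiAux n c l K (fun i => X i.1 ω) ∂μ := lintegral_congr hsplit
    _ = (∫⁻ ω, PhiAux n m δ c l K (fun i => X i.1 ω) ∂μ)
          * ∫⁻ ω, PsiAux n c l K (fun i => X i.1 ω) ∂μ :=
        factor_lemma hXmeas hXindep n (PhiAux_measurable n m δ c l K)
          (PsiAux_measurable n c l K)
    _ ≤ (∫⁻ ω, (Gset X m δ c (n + 1)).indicator (Mfun X c l K n) ω ∂μ) * 1 := by
        apply mul_le_mul'
        · exact le_of_eq (lintegral_congr fun ω => PhiAux_eq X n m δ c l K ω)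
        · exact hfactor hr hδ hXmeas hXbound hXmean n
    _ = ∫⁻ ω, (Gset X m δ c (n + 1)).indicator (Mfun X c l K n) ω ∂μ := mul_one _

end Max

section Max2

variable {Ω : Type*} {mΩ : MeasurableSpace Ω} {μ : Measure Ω}

lemma key_induction [IsProbabilityMeasure μ] {r δ c : ℝ} (hr : 0 < r) (hδ : 0 < δ)
    {X : ℕ → Ω → ℝ} (hXmeas : ∀ i, Measurable (X i))
    (hXindep : iIndepFun X μ)
    (hXbound : ∀ i, ∀ᵐ ω ∂μ, X i ω ∈ Set.Icc 0 r)
    (hXmean : ∀ i, ∫ ω, X i ω ∂μ = c) (m : ℕ) (n : ℕ) :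
    (∑ t ∈ Finset.range n, ∫⁻ ω, (Eset X m δ c t).indicator
        (Mfun X c (4 * δ / r ^ 2) (2 * δ ^ 2 / r ^ 2) t) ω ∂μ)
      + ∫⁻ ω, (Gset X m δ c n).indicator
        (Mfun X c (4 * δ / r ^ 2) (2 * δ ^ 2 / r ^ 2) n) ω ∂μ ≤ 1 := by
  set l : ℝ := 4 * δ / r ^ 2 with hldef
  set K : ℝ := 2 * δ ^ 2 / r ^ 2 with hKdef
  induction n with
  | zero =>
    simp only [Finset.range_zero, Finset.sum_empty, zero_add]
    have hb : ∀ ω, (Gset X m δ c 0).indicator (Mfun X c l K 0) ω ≤ 1 := by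
      intro ω
      have hM0 : Mfun X c l K 0 ω = 1 := by
        rw [Mfun]; simp [Ssum]
      calc (Gset X m δ c 0).indicator (Mfun X c l K 0) ω
          ≤ Mfun X c l K 0 ω := Set.indicator_le_self _ _ ω
        _ = 1 := hM0
    calc ∫⁻ ω, (Gset X m δ c 0).indicator (Mfun X c l K 0) ω ∂μ
        ≤ ∫⁻ _, 1 ∂μ := lintegral_mono hb
      _ = 1 := by simp
  | succ n ih =>
    rw [Finset.sum_range_succ]
    have hdecomp : ∀ ω, (Gset X m δ c n).indicator (Mfun X c l K n) ω
        = (Eset X m δ c n).indicator (Mfun X c l K n) ω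
          + (Gset X m δ c (n + 1)).indicator (Mfun X c l K n) ω := by
      intro ω
      by_cases hGn : ω ∈ Gset X m δ c n
      · by_cases hAn : ω ∈ Aset X m δ c n
        · have hE : ω ∈ Eset X m δ c n := ⟨hGn, hAn⟩
          have hG1 : ω ∉ Gset X m δ c (n + 1) := fun hc => hc n (Nat.lt_succ_self n) hAn
          rw [Set.indicator_of_mem hGn, Set.indicator_of_mem hE,
            Set.indicator_of_notMem hG1, add_zero]
        · have hE : ω ∉ Eset X m δ c n := fun hc => hAn hc.2
          have hG1 : ω ∈ Gset X m δ c (n + 1) := by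
            intro u hu
            rcases Nat.lt_succ_iff_lt_or_eq.1 hu with h | h
            · exact hGn u h
            · subst h; exact hAn
          rw [Set.indicator_of_mem hGn, Set.indicator_of_notMem hE,
            Set.indicator_of_mem hG1, zero_add]
      · have hE : ω ∉ Eset X m δ c n := fun hc => hGn hc.1
        have hG1 : ω ∉ Gset X m δ c (n + 1) :=
          fun hc => hGn (fun u hu => hc u (hu.trans (Nat.lt_succ_self n)))
        rw [Set.indicator_of_notMem hGn, Set.indicator_of_notMem hE,
          Set.indicator_of_notMem hG1, add_zero]
    have hsum : ∫⁻ ω, (Gset X m δ c n).indicator (Mfun X c l K n) ω ∂μ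
        = (∫⁻ ω, (Eset X m δ c n).indicator (Mfun X c l K n) ω ∂μ)
          + ∫⁻ ω, (Gset X m δ c (n + 1)).indicator (Mfun X c l K n) ω ∂μ := by
      rw [← lintegral_add_left ((Mfun_measurable hXmeas c l K n).indicator
        (Eset_measurable hXmeas m δ c n))]
      exact lintegral_congr hdecomp
    calc (∑ t ∈ Finset.range n, ∫⁻ ω, (Eset X m δ c t).indicator (Mfun X c l K t) ω ∂μ)
          + (∫⁻ ω, (Eset X m δ c n).indicator (Mfun X c l K n) ω ∂μ)
          + ∫⁻ ω, (Gset X m δ c (n + 1)).indicator (Mfun X c l K (n + 1)) ω ∂μ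
        ≤ (∑ t ∈ Finset.range n, ∫⁻ ω, (Eset X m δ c t).indicator (Mfun X c l K t) ω ∂μ)
          + (∫⁻ ω, (Eset X m δ c n).indicator (Mfun X c l K n) ω ∂μ)
          + ∫⁻ ω, (Gset X m δ c (n + 1)).indicator (Mfun X c l K n) ω ∂μ :=
          add_le_add_right (hstep hr hδ hXmeas hXindep hXbound hXmean m n) _
      _ = (∑ t ∈ Finset.range n, ∫⁻ ω, (Eset X m δ c t).indicator (Mfun X c l K t) ω ∂μ)
          + ∫⁻ ω, (Gset X m δ c n).indicator (Mfun X c l K n) ω ∂μ := by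
          rw [hsum, add_assoc]
      _ ≤ 1 := ih

lemma maximal_side (μ : Measure Ω) [IsProbabilityMeasure μ] {r δ c : ℝ}
    (hr : 0 < r) (hδ : 0 < δ)
    {X : ℕ → Ω → ℝ} (hXmeas : ∀ i, Measurable (X i))
    (hXindep : iIndepFun X μ)
    (hXbound : ∀ i, ∀ᵐ ω ∂μ, X i ω ∈ Set.Icc 0 r)
    (hXmean : ∀ i, ∫ ω, X i ω ∂μ = c) (m : ℕ) :
    μ {ω | ∃ t : ℕ, m ≤ t ∧ (t : ℝ) * δ < (∑ i ∈ Finset.range t, X i ω) - t * c}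
      ≤ ENNReal.ofReal (Real.exp (-(2 * m * δ ^ 2 / r ^ 2))) := by
  classical
  set l : ℝ := 4 * δ / r ^ 2 with hldef
  set K : ℝ := 2 * δ ^ 2 / r ^ 2 with hKdef
  have hl0 : 0 < l := by positivity
  have hK0 : (0:ℝ) ≤ K := by positivity
  have hEbound : ∀ t, μ (Eset X m δ c t)
      ≤ ENNReal.ofReal (Real.exp (-((m : ℝ) * K)))
        * ∫⁻ ω, (Eset X m δ c t).indicator (Mfun X c l K t) ω ∂μ := by
    intro t
    have h1 : ENNReal.ofReal (Real.exp ((m : ℝ) * K)) * μ (Eset X m δ c t)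
        ≤ ∫⁻ ω, (Eset X m δ c t).indicator (Mfun X c l K t) ω ∂μ := by
      rw [← lintegral_indicator_const (Eset_measurable hXmeas m δ c t)]
      apply lintegral_mono
      intro ω
      by_cases hω : ω ∈ Eset X m δ c t
      · rw [Set.indicator_of_mem hω, Set.indicator_of_mem hω]
        simp only [Mfun]
        apply ENNReal.ofReal_le_ofReal
        apply Real.exp_le_exp.2
        obtain ⟨hGt, hm, hlt⟩ := hω
        have h2 : (m : ℝ) * K ≤ (t : ℝ) * K :=
          mul_le_mul_of_nonneg_right (Nat.cast_le.2 hm) hK0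
        have h3 : l * ((t : ℝ) * δ) ≤ l * (Ssum X t ω - t * c) :=
          mul_le_mul_of_nonneg_left hlt.le hl0.le
        have h4 : l * ((t : ℝ) * δ) - (t : ℝ) * K = (t : ℝ) * K := by
          rw [hldef, hKdef]; field_simp; ring
        linarith
      · rw [Set.indicator_of_notMem hω, Set.indicator_of_notMem hω]
    calc μ (Eset X m δ c t) = ENNReal.ofReal (Real.exp (-((m : ℝ) * K)))
          * (ENNReal.ofReal (Real.exp ((m : ℝ) * K)) * μ (Eset X m δ c t)) := by
          rw [← mul_assoc, ← ENNReal.ofReal_mul (Real.exp_nonneg _), ← Real.exp_add]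
          simp
      _ ≤ _ := mul_le_mul_right h1 _
  have htsum : (∑' t, ∫⁻ ω, (Eset X m δ c t).indicator (Mfun X c l K t) ω ∂μ) ≤ 1 := by
    rw [ENNReal.tsum_eq_iSup_nat]
    apply iSup_le
    intro n
    exact le_trans le_self_add (key_induction hr hδ hXmeas hXindep hXbound hXmean m n)
  have hsub : {ω | ∃ t : ℕ, m ≤ t ∧ (t : ℝ) * δ < (∑ i ∈ Finset.range t, X i ω) - t * c}
      ⊆ ⋃ t, Eset X m δ c t := by
    intro ω hω
    have hex : ∃ t, ω ∈ Aset X m δ c t := hω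
    refine Set.mem_iUnion.2 ⟨Nat.find hex, ⟨?_, Nat.find_spec hex⟩⟩
    intro u hu
    exact Nat.find_min hex hu
  have hfin : ENNReal.ofReal (Real.exp (-((m : ℝ) * K)))
      = ENNReal.ofReal (Real.exp (-(2 * m * δ ^ 2 / r ^ 2))) := by
    congr 2
    rw [hKdef]; ring
  calc μ {ω | ∃ t : ℕ, m ≤ t ∧ (t : ℝ) * δ < (∑ i ∈ Finset.range t, X i ω) - t * c}
      ≤ μ (⋃ t, Eset X m δ c t) := measure_mono hsub
    _ ≤ ∑' t, μ (Eset X m δ c t) := measure_iUnion_le _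
    _ ≤ ∑' t, ENNReal.ofReal (Real.exp (-((m : ℝ) * K)))
          * ∫⁻ ω, (Eset X m δ c t).indicator (Mfun X c l K t) ω ∂μ :=
        ENNReal.tsum_le_tsum hEbound
    _ = ENNReal.ofReal (Real.exp (-((m : ℝ) * K)))
          * ∑' t, ∫⁻ ω, (Eset X m δ c t).indicator (Mfun X c l K t) ω ∂μ :=
        ENNReal.tsum_mul_left
    _ ≤ ENNReal.ofReal (Real.exp (-((m : ℝ) * K))) * 1 := mul_le_mul_right htsum _
    _ = ENNReal.ofReal (Real.exp (-(2 * m * δ ^ 2 / r ^ 2))) := by rw [mul_one, hfin]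

end Max2

end SlidingAux

/-- Sliding-set deviation lemma: rewards of decision `k` are i.i.d. random
variables `X i ∈ [0, r]` with mean `r·θ` (so `E[μ̂_k(n)] = r·θ`), `μ̂_k(n)` is
the empirical average over the `t_k(n)` selections of `k` before `n`.  If a
random set of instants `Λ ⊆ ⋃_{s≥1} Λ(s)` is such that each `Λ(s)` has at most
one element, `t_k(n) ≥ ε·s` for `n ∈ Λ(s)`, and `{n ∈ Λ(s)}` is
`F_n`-measurable, then the expected number of instants `n ∈ Λ` with
`|μ̂_k(n) − E[μ̂_k(n)]| > δ` is at most `r²/(ε·δ²)`. -/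
theorem sliding_set_deviation {Ω : Type*} {m0 : MeasurableSpace Ω}
    (μ : Measure Ω) [IsProbabilityMeasure μ] (F : Filtration ℕ m0)
    (r θ : ℝ) (hr : 0 < r) (hθ : θ ∈ Set.Icc (0:ℝ) 1)
    (X : ℕ → Ω → ℝ) (hXmeas : ∀ i, Measurable (X i))
    (hXindep : iIndepFun X μ)
    (hXbound : ∀ i, ∀ᵐ ω ∂μ, X i ω ∈ Set.Icc 0 r)
    (hXmean : ∀ i, ∫ ω, X i ω ∂μ = r * θ)
    (hXadapted : Adapted F X)
    (tk : ℕ → Ω → ℕ) (μhat : ℕ → Ω → ℝ)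
    (hμhat : ∀ n ω, μhat n ω = (1 / (tk n ω : ℝ)) * ∑ i ∈ Finset.range (tk n ω), X i ω)
    (ε δ : ℝ) (hε : 0 < ε) (hδ : 0 < δ)
    (Λ : Ω → Set ℕ) (Λs : ℕ → Ω → Set ℕ)
    (hcover : ∀ ω, Λ ω ⊆ ⋃ s ≥ 1, Λs s ω)
    (hcount : ∀ s : ℕ, 1 ≤ s → ∀ ω, ∀ n ∈ Λs s ω, ε * s ≤ (tk n ω : ℝ))
    (hsingle : ∀ s ω, (Λs s ω).Subsingleton)
    (hmeasΛs : ∀ s n : ℕ, MeasurableSet[F n] {ω | n ∈ Λs s ω}) :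
    ∫⁻ ω, ∑' n : ℕ,
        Set.indicator {ω' | n ∈ Λ ω' ∧ δ < |μhat n ω' - r * θ|} (fun _ => (1 : ℝ≥0∞)) ω ∂μ
      ≤ ENNReal.ofReal (r ^ 2 / (ε * δ ^ 2)) := by
  classical
  set c : ℝ := r * θ with hcdef
  -- measurable union events
  set B : ℕ → Set Ω := fun s => {ω | ∃ t : ℕ, ε * s ≤ (t : ℝ) ∧
      δ < |(1 / (t : ℝ)) * (∑ i ∈ Finset.range t, X i ω) - c|} with hBdef
  have hBmeas : ∀ s, MeasurableSet (B s) := by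
    intro s
    have : B s = ⋃ t : ℕ, ({ω | ε * s ≤ (t : ℝ)} ∩
        {ω | δ < |(1 / (t : ℝ)) * (∑ i ∈ Finset.range t, X i ω) - c|}) := by
      ext ω; simp [hBdef, Set.mem_iUnion, Set.mem_setOf_eq]
    rw [this]
    refine MeasurableSet.iUnion fun t => (MeasurableSet.const _).inter ?_
    exact measurableSet_lt measurable_const
      (((Finset.measurable_sum _ fun i _ => hXmeas i).const_mul _).sub measurable_const).abs
  -- pointwise bound
  have hpt : ∀ ω, (∑' n : ℕ,
      Set.indicator {ω' | n ∈ Λ ω' ∧ δ < |μhat n ω' - c|} (fun _ => (1 : ℝ≥0∞)) ω)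
      ≤ ∑' s : ℕ, Set.indicator (B (s + 1)) (fun _ => (1 : ℝ≥0∞)) ω := by
    intro ω
    set Dn : ℕ → ℕ → Set Ω := fun n s => {ω' | n ∈ Λs s ω' ∧ δ < |μhat n ω' - c|} with hDndef
    have h1 : ∀ n : ℕ, Set.indicator {ω' | n ∈ Λ ω' ∧ δ < |μhat n ω' - c|}
        (fun _ => (1 : ℝ≥0∞)) ω ≤ ∑' s : ℕ, Set.indicator (Dn n (s + 1)) (fun _ => (1 : ℝ≥0∞)) ω := by
      intro n
      by_cases hω : ω ∈ {ω' | n ∈ Λ ω' ∧ δ < |μhat n ω' - c|}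
      · obtain ⟨hΛω, hbad⟩ := hω
        obtain ⟨s, hs1, hmem⟩ := Set.mem_iUnion₂.1 (hcover ω hΛω)
        have hseq : s - 1 + 1 = s := Nat.succ_pred_eq_of_pos hs1
        have hmemD : ω ∈ Dn n s := by exact ⟨hmem, hbad⟩
        have h2 : Set.indicator (Dn n (s - 1 + 1)) (fun _ => (1 : ℝ≥0∞)) ω = 1 := by
          rw [hseq]
          exact Set.indicator_of_mem hmemD _
        rw [Set.indicator_of_mem (by exact ⟨hΛω, hbad⟩)]
        calc (1 : ℝ≥0∞) = Set.indicator (Dn n (s - 1 + 1)) (fun _ => (1 : ℝ≥0∞)) ω := h2.symm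
          _ ≤ ∑' s : ℕ, Set.indicator (Dn n (s + 1)) (fun _ => (1 : ℝ≥0∞)) ω :=
            ENNReal.le_tsum (s - 1)
      · rw [Set.indicator_of_notMem hω]; exact zero_le
    have h3 : ∀ s : ℕ, (∑' n : ℕ, Set.indicator (Dn n (s + 1)) (fun _ => (1 : ℝ≥0∞)) ω)
        ≤ Set.indicator (B (s + 1)) (fun _ => (1 : ℝ≥0∞)) ω := by
      intro s
      by_cases hx : ∃ n, ω ∈ Dn n (s + 1)
      · obtain ⟨n0, hn0⟩ := hx
        have huniq : ∀ b : ℕ, b ≠ n0 →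
            Set.indicator (Dn b (s + 1)) (fun _ => (1 : ℝ≥0∞)) ω = 0 := by
          intro b hb
          apply Set.indicator_of_notMem
          intro hbmem
          exact hb (hsingle (s + 1) ω hbmem.1 hn0.1)
        rw [tsum_eq_single n0 huniq]
        have hωB : ω ∈ B (s + 1) := by
          refine ⟨tk n0 ω, hcount (s + 1) (Nat.le_add_left 1 s) ω n0 hn0.1, ?_⟩
          rw [← hμhat n0 ω]
          exact hn0.2
        rw [Set.indicator_of_mem hn0 _, Set.indicator_of_mem hωB]
      · push_neg at hx
        have : ∀ n, Set.indicator (Dn n (s + 1)) (fun _ => (1 : ℝ≥0∞)) ω = 0 :=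
          fun n => Set.indicator_of_notMem (hx n) _
        rw [tsum_congr this, tsum_zero]
        exact zero_le
    calc (∑' n : ℕ, Set.indicator {ω' | n ∈ Λ ω' ∧ δ < |μhat n ω' - c|}
          (fun _ => (1 : ℝ≥0∞)) ω)
        ≤ ∑' n : ℕ, ∑' s : ℕ, Set.indicator (Dn n (s + 1)) (fun _ => (1 : ℝ≥0∞)) ω :=
          ENNReal.tsum_le_tsum h1
      _ = ∑' s : ℕ, ∑' n : ℕ, Set.indicator (Dn n (s + 1)) (fun _ => (1 : ℝ≥0∞)) ω :=
          ENNReal.tsum_comm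
      _ ≤ ∑' s : ℕ, Set.indicator (B (s + 1)) (fun _ => (1 : ℝ≥0∞)) ω :=
          ENNReal.tsum_le_tsum h3
  -- bound the measure of each B s
  have hXint : ∀ i, Integrable (X i) μ := by
    intro i
    refine (integrable_const r).mono' (hXmeas i).aestronglyMeasurable ?_
    filter_upwards [hXbound i] with ω h
    rw [Real.norm_eq_abs, abs_le]
    exact ⟨by linarith [h.1, hr], h.2⟩
  have hBbound : ∀ s : ℕ, 1 ≤ s →
      μ (B s) ≤ 2 * ENNReal.ofReal (Real.exp (-(2 * ε * s * δ ^ 2 / r ^ 2))) := by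
    intro s hs1
    set m : ℕ := ⌈ε * s⌉₊ with hmdef
    set P : Set Ω := {ω | ∃ t : ℕ, m ≤ t ∧ (t : ℝ) * δ <
        (∑ i ∈ Finset.range t, X i ω) - t * c} with hPdef
    set N : Set Ω := {ω | ∃ t : ℕ, m ≤ t ∧ (t : ℝ) * δ <
        (∑ i ∈ Finset.range t, (r - X i ω)) - t * (r - c)} with hNdef
    have hsub : B s ⊆ P ∪ N := by
      intro ω hω
      obtain ⟨t, hts, habs⟩ := hω
      have htpos : (0 : ℝ) < t := by
        have : (0:ℝ) < ε * s := by
          have : (1:ℝ) ≤ s := by exact_mod_cast hs1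
          nlinarith
        linarith
      have hmt : m ≤ t := Nat.ceil_le.2 hts
      rcases lt_abs.1 habs with hpos | hneg
      · left
        refine ⟨t, hmt, ?_⟩
        have := mul_lt_mul_of_pos_left hpos htpos
        have heq : (t:ℝ) * ((1 / (t : ℝ)) * (∑ i ∈ Finset.range t, X i ω) - c)
            = (∑ i ∈ Finset.range t, X i ω) - t * c := by
          field_simp
        calc (t : ℝ) * δ < (t:ℝ) * ((1 / (t : ℝ)) * (∑ i ∈ Finset.range t, X i ω) - c) := this
          _ = (∑ i ∈ Finset.range t, X i ω) - t * c := heq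
      · right
        refine ⟨t, hmt, ?_⟩
        rw [neg_sub] at hneg
        have := mul_lt_mul_of_pos_left hneg htpos
        have heq : (t:ℝ) * (c - (1 / (t : ℝ)) * (∑ i ∈ Finset.range t, X i ω))
            = (∑ i ∈ Finset.range t, (r - X i ω)) - t * (r - c) := by
          rw [Finset.sum_sub_distrib, Finset.sum_const, Finset.card_range]
          field_simp
          ring
        calc (t : ℝ) * δ < (t:ℝ) * (c - (1 / (t : ℝ)) * (∑ i ∈ Finset.range t, X i ω)) := this
          _ = _ := heq
    have hmges : (ε * s : ℝ) ≤ m := Nat.le_ceil _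
    have hexpmono : ENNReal.ofReal (Real.exp (-(2 * m * δ ^ 2 / r ^ 2)))
        ≤ ENNReal.ofReal (Real.exp (-(2 * ε * s * δ ^ 2 / r ^ 2))) := by
      apply ENNReal.ofReal_le_ofReal
      apply Real.exp_le_exp.2
      rw [neg_le_neg_iff, div_le_div_iff₀ (by positivity) (by positivity)]
      nlinarith [mul_le_mul_of_nonneg_right hmges
        (show (0:ℝ) ≤ 2 * δ ^ 2 * r ^ 2 by positivity)]
    have hP : μ P ≤ ENNReal.ofReal (Real.exp (-(2 * m * δ ^ 2 / r ^ 2))) :=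
      maximal_side μ hr hδ hXmeas hXindep hXbound hXmean m
    have hN : μ N ≤ ENNReal.ofReal (Real.exp (-(2 * m * δ ^ 2 / r ^ 2))) := by
      apply maximal_side μ hr hδ (X := fun i ω => r - X i ω)
        (fun i => measurable_const.sub (hXmeas i)) ?_ ?_ ?_ m
      · exact hXindep.comp (fun i => (r - ·)) (fun i => measurable_const.sub measurable_id)
      · intro i
        filter_upwards [hXbound i] with ω h
        exact ⟨by linarith [h.2], by linarith [h.1]⟩
      · intro i
        rw [integral_sub (integrable_const r) (hXint i), integral_const, hXmean i]
        simp
    calc μ (B s) ≤ μ (P ∪ N) := measure_mono hsub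
      _ ≤ μ P + μ N := measure_union_le _ _
      _ ≤ ENNReal.ofReal (Real.exp (-(2 * m * δ ^ 2 / r ^ 2)))
          + ENNReal.ofReal (Real.exp (-(2 * m * δ ^ 2 / r ^ 2))) := add_le_add hP hN
      _ = 2 * ENNReal.ofReal (Real.exp (-(2 * m * δ ^ 2 / r ^ 2))) := (two_mul _).symm
      _ ≤ 2 * ENNReal.ofReal (Real.exp (-(2 * ε * s * δ ^ 2 / r ^ 2))) :=
          mul_le_mul_right hexpmono _
  -- sum the geometric series
  set a : ℝ := 2 * ε * δ ^ 2 / r ^ 2 with hadef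
  have ha0 : 0 < a := by positivity
  set q : ℝ := Real.exp (-a) with hqdef
  have hq0 : 0 < q := Real.exp_pos _
  have hq1 : q < 1 := by
    rw [hqdef]
    exact Real.exp_lt_one_iff.2 (by linarith)
  have hgeom : (∑' s : ℕ, 2 * ENNReal.ofReal (Real.exp (-(2 * ε * (s+1) * δ ^ 2 / r ^ 2))))
      ≤ ENNReal.ofReal (r ^ 2 / (ε * δ ^ 2)) := by
    have hqs : ∀ s : ℕ, Real.exp (-(2 * ε * ((s:ℝ)+1) * δ ^ 2 / r ^ 2)) = q ^ (s + 1) := by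
      intro s
      rw [hqdef, ← Real.exp_nat_mul]
      congr 1
      push_cast
      rw [hadef]
      ring
    have hsummable : Summable (fun s : ℕ => q ^ (s + 1)) := by
      have heq : (fun s : ℕ => q ^ (s + 1)) = fun s => q * q ^ s :=
        funext fun s => by rw [pow_succ]; ring
      rw [heq]
      exact (summable_geometric_of_lt_one hq0.le hq1).mul_left q
    calc (∑' s : ℕ, 2 * ENNReal.ofReal (Real.exp (-(2 * ε * (s+1) * δ ^ 2 / r ^ 2))))
        = 2 * ∑' s : ℕ, ENNReal.ofReal (q ^ (s + 1)) := by
          rw [ENNReal.tsum_mul_left]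
          congr 1
          apply tsum_congr
          intro s
          congr 1
          exact_mod_cast hqs s
      _ = 2 * ENNReal.ofReal (∑' s : ℕ, q ^ (s + 1)) := by
          rw [ENNReal.ofReal_tsum_of_nonneg (fun s => by positivity) hsummable]
      _ ≤ ENNReal.ofReal (r ^ 2 / (ε * δ ^ 2)) := by
          have hsumval : (∑' s : ℕ, q ^ (s + 1)) = q * (1 - q)⁻¹ := by
            have h1 : (∑' s : ℕ, q ^ (s + 1)) = q * ∑' s : ℕ, q ^ s := by
              rw [← tsum_mul_left]
              apply tsum_congr
              intro s
              rw [pow_succ]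
              ring
            rw [h1, tsum_geometric_of_lt_one hq0.le hq1]
          have h1q : 0 < 1 - q := by linarith
          have hq1a : q * (1 + a) ≤ 1 := by
            have hE : a + 1 ≤ Real.exp a := Real.add_one_le_exp a
            have hqE : q * Real.exp a = 1 := by
              rw [hqdef, ← Real.exp_add]; simp
            nlinarith
          have hval : 2 * (q * (1 - q)⁻¹) ≤ r ^ 2 / (ε * δ ^ 2) := by
            have h2 : q * (1 - q)⁻¹ ≤ 1 / a := by
              rw [← div_eq_mul_inv, div_le_div_iff₀ h1q ha0]
              nlinarith
            have h3 : 2 * (1 / a) = r ^ 2 / (ε * δ ^ 2) := by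
              rw [hadef]
              field_simp
            linarith
          calc 2 * ENNReal.ofReal (∑' s : ℕ, q ^ (s + 1))
              = ENNReal.ofReal (2 * (q * (1 - q)⁻¹)) := by
                rw [hsumval, ENNReal.ofReal_mul (by norm_num : (0:ℝ) ≤ 2)]
                norm_num
            _ ≤ ENNReal.ofReal (r ^ 2 / (ε * δ ^ 2)) := ENNReal.ofReal_le_ofReal hval
  -- put everything together
  calc ∫⁻ ω, ∑' n : ℕ,
        Set.indicator {ω' | n ∈ Λ ω' ∧ δ < |μhat n ω' - c|} (fun _ => (1 : ℝ≥0∞)) ω ∂μ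
      ≤ ∫⁻ ω, ∑' s : ℕ, Set.indicator (B (s + 1)) (fun _ => (1 : ℝ≥0∞)) ω ∂μ :=
        lintegral_mono hpt
    _ = ∑' s : ℕ, ∫⁻ ω, Set.indicator (B (s + 1)) (fun _ => (1 : ℝ≥0∞)) ω ∂μ :=
        lintegral_tsum fun s => (measurable_const.indicator (hBmeas (s + 1))).aemeasurable
    _ = ∑' s : ℕ, μ (B (s + 1)) := by
        apply tsum_congr
        intro s
        rw [lintegral_indicator_const (hBmeas (s + 1)), one_mul]
    _ ≤ ∑' s : ℕ, 2 * ENNReal.ofReal (Real.exp (-(2 * ε * ((s:ℝ)+1) * δ ^ 2 / r ^ 2))) := by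
        apply ENNReal.tsum_le_tsum
        intro s
        have h := hBbound (s + 1) (Nat.le_add_left 1 s)
        have hcast : ((s + 1 : ℕ) : ℝ) = (s : ℝ) + 1 := by push_cast; ring
        rw [hcast] at h
        exact h
    _ ≤ ENNReal.ofReal (r ^ 2 / (ε * δ ^ 2)) := hgeom
end

section
/- Let θ ∈ [0,1]^K be unimodal with peak k* (with respect to rates r₁ < ⋯ < r_K) and fix k > k*. For ε > 0 define λ_ε ∈ [0,1]^K by λ_l = (1 + (l−k*)ε)·r_{k*}θ_{k*}/r_l for k* ≤ l ≤ k and λ_l = θ_l otherwise. Then for ε small enough λ_ε is unimodal with r_k(λ_ε)_k > r_{k*}(λ_ε)_{k*} = r_{k*}θ_{k*}, and Σ_{l≠k*} I(θ_l, (λ_ε)_l) → Σ_{l=k*+1}^k I(θ_l, r_{k*}θ_{k*}/r_l) as ε → 0⁺. -/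
set_option maxHeartbeats 1600000


/-- Bernoulli Kullback–Leibler divergence. -/
noncomputable def klBer (p q : ℝ) : ℝ :=
  p * Real.log (p / q) + (1 - p) * Real.log ((1 - p) / (1 - q))

/-- `η` is unimodal with peak `kstar` with respect to the rates `r` on
decisions `1,…,K`. -/
def UnimodalPeak (K kstar : ℕ) (r η : ℕ → ℝ) : Prop :=
  (∀ l, 1 ≤ l → l + 1 ≤ kstar → r l * η l < r (l + 1) * η (l + 1)) ∧
  (∀ l, kstar ≤ l → l + 1 ≤ K → r (l + 1) * η (l + 1) < r l * η l)

lemma klBer_self (p : ℝ) : klBer p p = 0 := by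
  have h : ∀ x : ℝ, Real.log (x / x) = 0 := by
    intro x
    rcases eq_or_ne x 0 with h | h
    · simp [h]
    · rw [div_self h, Real.log_one]
  unfold klBer
  rw [h, h]; ring

lemma r_mono (K : ℕ) (r : ℕ → ℝ) (h : ∀ l, 1 ≤ l → l + 1 ≤ K → r l < r (l + 1)) :
    ∀ a b, 1 ≤ a → a ≤ b → b ≤ K → r a ≤ r b := by
  intro a b ha
  induction b with
  | zero => intro hab _; omega
  | succ n ih =>
    intro hab hbK
    rcases eq_or_lt_of_le hab with h' | h'
    · rw [h']
    · have han : a ≤ n := Nat.lt_succ_iff.mp h'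
      exact (ih han (by omega)).trans (h n (by omega) hbK).le

/-- The confusing-parameter construction `λ_ε`: for small `ε > 0` it is a valid
unimodal parameter making `k` strictly better than `k*`, agreeing with `θ` at
`k*`, and `∑_{l≠k*} I(θ_l,(λ_ε)_l) → ∑_{l=k*+1}^k I(θ_l, r_{k*}θ_{k*}/r_l)` as
`ε → 0⁺`. -/
theorem lambda_eps_construction (K : ℕ) (r θ : ℕ → ℝ) (kstar k : ℕ)
    (hrpos : ∀ l, 0 < r l) (hrmono : ∀ l, 1 ≤ l → l + 1 ≤ K → r l < r (l + 1))
    (hθ : ∀ l, 1 ≤ l → l ≤ K → θ l ∈ Set.Ioo (0:ℝ) 1)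
    (hkstar : 1 ≤ kstar) (hk : kstar < k) (hkK : k ≤ K)
    (hθuni : UnimodalPeak K kstar r θ)
    (hratio : ∀ l, kstar ≤ l → l ≤ k → r kstar * θ kstar / r l < 1)
    (hstrict : ∀ l, kstar < l → l ≤ k → θ l < r kstar * θ kstar / r l)
    (lamε : ℝ → ℕ → ℝ)
    (hlam : ∀ ε l, lamε ε l =
      if kstar ≤ l ∧ l ≤ k then
        (1 + ((l : ℝ) - (kstar : ℝ)) * ε) * (r kstar * θ kstar) / r l
      else θ l) :
    (∃ ε₀ > (0:ℝ), ∀ ε : ℝ, 0 < ε → ε < ε₀ →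
        (∀ l, 1 ≤ l → l ≤ K → lamε ε l ∈ Set.Icc (0:ℝ) 1) ∧
        UnimodalPeak K k r (lamε ε) ∧
        lamε ε kstar = θ kstar ∧
        r kstar * lamε ε kstar < r k * lamε ε k) ∧
    Filter.Tendsto
      (fun ε => ∑ l ∈ (Finset.Icc 1 K).erase kstar, klBer (θ l) (lamε ε l))
      (nhdsWithin 0 (Set.Ioi 0))
      (nhds (∑ l ∈ Finset.Icc (kstar + 1) k, klBer (θ l) (r kstar * θ kstar / r l))) := by
  have hKks : kstar ≤ K := le_trans hk.le hkK
  have hθks := hθ kstar hkstar hKks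
  have hθ0 : 0 < θ kstar := hθks.1
  have hθ1 : θ kstar < 1 := hθks.2
  set c : ℝ := r kstar * θ kstar with hcdef
  have hc : 0 < c := mul_pos (hrpos kstar) hθ0
  have hrne : ∀ m, r m ≠ 0 := fun m => (hrpos m).ne'
  have hbandval : ∀ ε l, kstar ≤ l → l ≤ k →
      lamε ε l = (1 + ((l : ℝ) - (kstar : ℝ)) * ε) * c / r l := by
    intro ε l h1 h2
    rw [hlam, if_pos ⟨h1, h2⟩]
  have houtval : ∀ (ε : ℝ) l, (l < kstar ∨ k < l) → lamε ε l = θ l := by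
    intro ε l hl
    rw [hlam, if_neg (by omega)]
  have hfix : ∀ ε : ℝ, lamε ε kstar = θ kstar := by
    intro ε
    rw [hbandval ε kstar le_rfl hk.le, hcdef]
    rw [sub_self, zero_mul, add_zero, one_mul, mul_comm (r kstar), mul_div_assoc,
      div_self (hrne kstar), mul_one]
  have hkk : (0:ℝ) < (k : ℝ) - kstar := by
    have : (kstar : ℝ) < k := by exact_mod_cast hk
    linarith
  have hinv : 1 < 1 / θ kstar := by
    rw [lt_div_iff₀ hθ0]; linarith
  constructor
  · refine ⟨(1 / θ kstar - 1) / ((k : ℝ) - kstar), div_pos (by linarith) hkk, ?_⟩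
    intro ε hε hεlt
    have hkey : ((k : ℝ) - kstar) * ε < 1 / θ kstar - 1 := by
      have := (lt_div_iff₀ hkk).mp hεlt
      linarith [this]
    refine ⟨?_, ?_, hfix ε, ?_⟩
    · -- membership in [0,1]
      intro l hl1 hlK
      by_cases hb : kstar ≤ l ∧ l ≤ k
      · rw [hbandval ε l hb.1 hb.2]
        have hl0 : (0:ℝ) ≤ (l : ℝ) - kstar := by
          have : (kstar : ℝ) ≤ l := by exact_mod_cast hb.1
          linarith
        have hlk : (l : ℝ) ≤ k := by exact_mod_cast hb.2
        have hrl : r kstar ≤ r l := r_mono K r hrmono kstar l hkstar hb.1 hlK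
        constructor
        · apply div_nonneg _ (hrpos l).le
          have : 0 ≤ ((l:ℝ) - kstar) * ε := mul_nonneg hl0 hε.le
          nlinarith [hc.le]
        · rw [div_le_one (hrpos l)]
          have hcl : c ≤ θ kstar * r l := by
            rw [hcdef]; nlinarith [hθ0]
          have h1 : 1 + ((l:ℝ) - kstar) * ε ≤ 1 + ((k:ℝ) - kstar) * ε := by nlinarith
          have h2 : 1 + ((k:ℝ) - kstar) * ε < 1 / θ kstar := by linarith
          have hx0 : 0 ≤ 1 + ((l:ℝ) - kstar) * ε := by nlinarith
          have hθinv : (1 / θ kstar) * (θ kstar * r l) = r l := by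
            field_simp
          nlinarith [mul_le_mul_of_nonneg_left hcl hx0,
            mul_lt_mul_of_pos_right h2 (mul_pos hθ0 (hrpos l)),
            mul_le_mul_of_nonneg_right h1 (mul_pos hθ0 (hrpos l)).le]
      · rw [hlam, if_neg hb]
        have := hθ l hl1 hlK
        exact ⟨this.1.le, this.2.le⟩
    · -- unimodality with peak k
      constructor
      · intro l hl1 hlk
        by_cases hcase : kstar ≤ l
        · rw [hbandval ε l hcase (by omega), hbandval ε (l+1) (by omega) hlk]
          have e1 : r l * ((1 + ((l:ℝ) - kstar) * ε) * c / r l)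
              = (1 + ((l:ℝ) - kstar) * ε) * c := by
            rw [mul_comm, div_mul_cancel₀ _ (hrne l)]
          have e2 : r (l+1) * ((1 + ((((l:ℕ)+1:ℕ) : ℝ) - (kstar:ℝ)) * ε) * c / r (l+1))
              = (1 + ((((l:ℕ)+1:ℕ) : ℝ) - (kstar:ℝ)) * ε) * c := by
            rw [mul_comm, div_mul_cancel₀ _ (hrne (l+1))]
          rw [e1, e2]
          push_cast
          nlinarith [mul_pos hε hc]
        · have hl1' : l + 1 ≤ kstar := by omega
          have hv1 : lamε ε l = θ l := houtval ε l (Or.inl (by omega))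
          have hv2 : lamε ε (l+1) = θ (l+1) := by
            by_cases h2 : l + 1 = kstar
            · rw [h2]; exact hfix ε
            · exact houtval ε (l+1) (Or.inl (by omega))
          rw [hv1, hv2]
          exact hθuni.1 l hl1 hl1'
      · intro l hkl hlK
        by_cases hl : l = k
        · subst hl
          have hv1 : lamε ε (l+1) = θ (l+1) := houtval ε (l+1) (Or.inr (by omega))
          rw [hv1, hbandval ε l (by omega) le_rfl]
          have e1 : r l * ((1 + ((l:ℝ) - kstar) * ε) * c / r l)
              = (1 + ((l:ℝ) - kstar) * ε) * c := by
            rw [mul_comm, div_mul_cancel₀ _ (hrne l)]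
          rw [e1]
          have hdec : r (l+1) * θ (l+1) < r l * θ l := hθuni.2 l (by omega) hlK
          have hstr : θ l < c / r l := hstrict l hk le_rfl
          have : r l * θ l < c := by
            rw [lt_div_iff₀ (hrpos l)] at hstr
            nlinarith [hstr]
          have hx : 0 < ((l:ℝ) - kstar) * ε := by
            apply mul_pos _ hε
            have : (kstar:ℝ) < l := by exact_mod_cast hk
            linarith
          nlinarith [hc]
        · have h1 : lamε ε l = θ l := houtval ε l (Or.inr (by omega))
          have h2 : lamε ε (l+1) = θ (l+1) := houtval ε (l+1) (Or.inr (by omega))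
          rw [h1, h2]
          exact hθuni.2 l (by omega) hlK
    · -- strict improvement at k
      rw [hfix ε, hbandval ε k hk.le le_rfl]
      have e1 : r k * ((1 + ((k:ℝ) - kstar) * ε) * c / r k)
          = (1 + ((k:ℝ) - kstar) * ε) * c := by
        rw [mul_comm, div_mul_cancel₀ _ (hrne k)]
      rw [e1, ← hcdef]
      nlinarith [mul_pos hkk hε, hc]
  · -- the limit
    have hsum : ∀ ε : ℝ,
        (∑ l ∈ (Finset.Icc 1 K).erase kstar, klBer (θ l) (lamε ε l))
          = ∑ l ∈ Finset.Icc (kstar + 1) k,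
              klBer (θ l) ((1 + ((l:ℝ) - kstar) * ε) * c / r l) := by
      intro ε
      have hsub : Finset.Icc (kstar + 1) k ⊆ (Finset.Icc 1 K).erase kstar := by
        intro l hl
        simp only [Finset.mem_Icc] at hl
        simp only [Finset.mem_erase, Finset.mem_Icc]
        omega
      rw [← Finset.sum_subset hsub]
      · apply Finset.sum_congr rfl
        intro l hl
        simp only [Finset.mem_Icc] at hl
        rw [hbandval ε l (by omega) hl.2]
      · intro l hl hnl
        simp only [Finset.mem_erase, Finset.mem_Icc] at hl
        simp only [Finset.mem_Icc] at hnl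
        have : lamε ε l = θ l := houtval ε l (by omega)
        rw [this, klBer_self]
    have hfun : (fun ε => ∑ l ∈ (Finset.Icc 1 K).erase kstar, klBer (θ l) (lamε ε l))
        = fun ε => ∑ l ∈ Finset.Icc (kstar + 1) k,
            klBer (θ l) ((1 + ((l:ℝ) - kstar) * ε) * c / r l) := funext hsum
    rw [hfun]
    apply Filter.Tendsto.mono_left _ nhdsWithin_le_nhds
    have htarget : ∀ l ∈ Finset.Icc (kstar + 1) k,
        r kstar * θ kstar / r l = c / r l := fun l _ => by rw [hcdef]
    rw [Finset.sum_congr rfl fun l hl => by rw [htarget l hl]]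
    apply tendsto_finset_sum
    intro l hl
    simp only [Finset.mem_Icc] at hl
    have hlK : l ≤ K := le_trans hl.2 hkK
    have hθl := hθ l (by omega) hlK
    have hq0pos : 0 < c / r l := div_pos hc (hrpos l)
    have hq0lt : c / r l < 1 := by rw [hcdef]; exact hratio l (by omega) hl.2
    have hq : ContinuousAt (fun ε : ℝ => (1 + ((l:ℝ) - kstar) * ε) * c / r l) 0 := by
      apply Continuous.continuousAt
      exact ((continuous_const.add (continuous_const.mul continuous_id)).mul
        continuous_const).div_const (r l)
    have hq0 : (1 + ((l:ℝ) - kstar) * (0:ℝ)) * c / r l = c / r l := by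
      rw [mul_zero, add_zero, one_mul]
    have h1' : 0 < 1 - θ l := by linarith [hθl.2]
    have h2' : 0 < 1 - c / r l := by linarith
    have hcont : ContinuousAt (fun q : ℝ => klBer (θ l) q) (c / r l) := by
      unfold klBer
      apply ContinuousAt.add
      · exact continuousAt_const.mul
          ((continuousAt_const.div continuousAt_id hq0pos.ne').log
            (ne_of_gt (div_pos hθl.1 hq0pos)))
      · exact continuousAt_const.mul
          ((continuousAt_const.div (continuousAt_const.sub continuousAt_id)
            h2'.ne').log (ne_of_gt (div_pos h1' h2')))
    have hqt : Filter.Tendsto (fun ε : ℝ => (1 + ((l:ℝ) - kstar) * ε) * c / r l)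
        (nhds 0) (nhds (c / r l)) := by
      have := hq.tendsto
      rwa [hq0] at this
    exact hcont.tendsto.comp hqt
end
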